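/- KKT condition at a zero coordinate: if β̂ is a minimizer of the LES objective Q and β̂_{kj} = 0, then |(1/n)·X_{kj}^T (y − Xβ̂)| ≤ λ α w_k / ( 1 + Σ_{l≠j, 1≤l≤p_k} exp(α|β̂_{kl}|) ). -/

import Mathlib

/-- **KKT condition at a zero coordinate.**
If `β̂` is a minimizer of the LES objective `Q` and `β̂ kj = 0`, then
`|(1/n) X kjᵀ (y - X β̂)| ≤ λ α w k / (1 + ∑_{l ≠ j} exp (α |β̂ kl|))`. -/
theorem les_kkt_zero (n K : ℕ) (hn : 0 < n) (hK : 0 < K)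
    (p : Fin K → ℕ) (hp : ∀ k, 1 ≤ p k)
    (X : Fin n → (Σ k : Fin K, Fin (p k)) → ℝ) (y : Fin n → ℝ)
    (lam α : ℝ) (hlam : 0 < lam) (hα : 0 < α)
    (w : Fin K → ℝ) (hw : ∀ k, 0 ≤ w k)
    (βh : (Σ k : Fin K, Fin (p k)) → ℝ)
    (hmin : IsMinOn
      (fun β : (Σ k : Fin K, Fin (p k)) → ℝ =>
        (1 / (2 * (n : ℝ))) * ∑ i : Fin n, (y i - ∑ j' : Σ k : Fin K, Fin (p k), X i j' * β j') ^ 2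
          + lam * ∑ l : Fin K, w l * Real.log (∑ j' : Fin (p l), Real.exp (α * |β ⟨l, j'⟩|)))
      Set.univ βh)
    (k : Fin K) (j : Fin (p k)) (hzero : βh ⟨k, j⟩ = 0) :
    |(1 / (n : ℝ)) * ∑ i : Fin n,
        X i ⟨k, j⟩ * (y i - ∑ j' : Σ k : Fin K, Fin (p k), X i j' * βh j')| ≤
      lam * α * w k /
        (1 + ∑ l ∈ Finset.univ.erase j, Real.exp (α * |βh ⟨k, l⟩|)) := by
  have hn' : (n : ℝ) ≠ 0 := Nat.cast_ne_zero.mpr hn.ne'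
  set S : ℝ := (1 / (n : ℝ)) * ∑ i : Fin n,
      X i ⟨k, j⟩ * (y i - ∑ j' : Σ k : Fin K, Fin (p k), X i j' * βh j') with hSdef
  set C : ℝ := (1 / (2 * (n : ℝ))) * ∑ i : Fin n, (X i ⟨k, j⟩) ^ 2 with hCdef
  set D : ℝ := ∑ l ∈ Finset.univ.erase j, Real.exp (α * |βh ⟨k, l⟩|) with hDdef
  have hD : 0 ≤ D := Finset.sum_nonneg fun _ _ => (Real.exp_pos _).le
  have hD1 : (0:ℝ) < 1 + D := by linarith
  -- key inequality from minimality
  have key : ∀ t : ℝ, t * S ≤ t ^ 2 * C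
      + lam * (w k * (Real.log (Real.exp (α * |t|) + D) - Real.log (1 + D))) := by
    intro t
    have hq : ∀ i : Fin n,
        ∑ j' : Σ k : Fin K, Fin (p k), X i j' * Function.update βh ⟨k, j⟩ t j'
          = (∑ j' : Σ k : Fin K, Fin (p k), X i j' * βh j') + X i ⟨k, j⟩ * t := by
      intro i
      rw [← Finset.add_sum_erase _ (fun j' => X i j' * Function.update βh ⟨k, j⟩ t j')
          (Finset.mem_univ ⟨k, j⟩),
        ← Finset.add_sum_erase _ (fun j' => X i j' * βh j') (Finset.mem_univ ⟨k, j⟩)]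
      have h1 : ∑ j' ∈ Finset.univ.erase ⟨k, j⟩, X i j' * Function.update βh ⟨k, j⟩ t j'
          = ∑ j' ∈ Finset.univ.erase ⟨k, j⟩, X i j' * βh j' :=
        Finset.sum_congr rfl fun x hx => by
          rw [Function.update_of_ne (Finset.ne_of_mem_erase hx)]
      rw [h1, Function.update_self, hzero]
      ring
    have hpen :
        ∑ l : Fin K, w l * Real.log (∑ j' : Fin (p l),
            Real.exp (α * |Function.update βh ⟨k, j⟩ t ⟨l, j'⟩|))
          = (∑ l : Fin K, w l * Real.log (∑ j' : Fin (p l), Real.exp (α * |βh ⟨l, j'⟩|)))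
            + w k * (Real.log (Real.exp (α * |t|) + D) - Real.log (1 + D)) := by
      have hinner : ∑ j' : Fin (p k), Real.exp (α * |Function.update βh ⟨k, j⟩ t ⟨k, j'⟩|)
          = Real.exp (α * |t|) + D := by
        rw [← Finset.add_sum_erase _
            (fun j' => Real.exp (α * |Function.update βh ⟨k, j⟩ t ⟨k, j'⟩|)) (Finset.mem_univ j)]
        congr 1
        · rw [Function.update_self]
        · refine Finset.sum_congr rfl fun x hx => ?_
          rw [Function.update_of_ne]
          intro h
          exact Finset.ne_of_mem_erase hx (by simpa using h)
      have hinner0 : ∑ j' : Fin (p k), Real.exp (α * |βh ⟨k, j'⟩|) = 1 + D := by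
        rw [← Finset.add_sum_erase _ (fun j' => Real.exp (α * |βh ⟨k, j'⟩|)) (Finset.mem_univ j),
          hzero]
        simp only [abs_zero, mul_zero, Real.exp_zero]
        rfl
      rw [← Finset.add_sum_erase _ (fun l => w l * Real.log (∑ j' : Fin (p l),
            Real.exp (α * |Function.update βh ⟨k, j⟩ t ⟨l, j'⟩|))) (Finset.mem_univ k),
        ← Finset.add_sum_erase _ (fun l => w l * Real.log (∑ j' : Fin (p l),
            Real.exp (α * |βh ⟨l, j'⟩|))) (Finset.mem_univ k)]
      have h2 : ∑ l ∈ Finset.univ.erase k, w l * Real.log (∑ j' : Fin (p l),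
            Real.exp (α * |Function.update βh ⟨k, j⟩ t ⟨l, j'⟩|))
          = ∑ l ∈ Finset.univ.erase k, w l * Real.log (∑ j' : Fin (p l),
            Real.exp (α * |βh ⟨l, j'⟩|)) := by
        refine Finset.sum_congr rfl fun l hl => ?_
        congr 1
        refine congrArg Real.log (Finset.sum_congr rfl fun x _ => ?_)
        rw [Function.update_of_ne (fun h => (Finset.ne_of_mem_erase hl) (congrArg Sigma.fst h))]
      rw [hinner, hinner0, h2]
      ring
    have hm := isMinOn_iff.mp hmin (Function.update βh ⟨k, j⟩ t) (Set.mem_univ _)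
    simp only [hq, hpen] at hm
    have hquad : (1 / (2 * (n : ℝ))) * ∑ i : Fin n,
        (y i - ((∑ j' : Σ k : Fin K, Fin (p k), X i j' * βh j') + X i ⟨k, j⟩ * t)) ^ 2
        = (1 / (2 * (n : ℝ))) * (∑ i : Fin n,
            (y i - ∑ j' : Σ k : Fin K, Fin (p k), X i j' * βh j') ^ 2)
          - t * S + t ^ 2 * C := by
      have hexp : ∀ i : Fin n,
          (y i - ((∑ j' : Σ k : Fin K, Fin (p k), X i j' * βh j') + X i ⟨k, j⟩ * t)) ^ 2
            = (y i - ∑ j' : Σ k : Fin K, Fin (p k), X i j' * βh j') ^ 2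
              - 2 * t * (X i ⟨k, j⟩ * (y i - ∑ j' : Σ k : Fin K, Fin (p k), X i j' * βh j'))
              + t ^ 2 * (X i ⟨k, j⟩) ^ 2 := fun i => by ring
      rw [Finset.sum_congr rfl fun i _ => hexp i]
      rw [Finset.sum_add_distrib, Finset.sum_sub_distrib, ← Finset.mul_sum, ← Finset.mul_sum]
      rw [hSdef, hCdef]
      field_simp
    rw [hquad] at hm
    linarith
  -- from key, bound |S| for each small positive t
  have key2 : ∀ t : ℝ, 0 < t →
      |S| ≤ t * C + lam * w k * α * Real.exp (α * t) / (1 + D) := by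
    intro t ht
    have h1 := key t
    have h2 := key (-t)
    rw [abs_of_pos ht] at h1
    rw [abs_neg, abs_of_pos ht] at h2
    have hlog : Real.log (Real.exp (α * t) + D) - Real.log (1 + D)
        ≤ α * t * Real.exp (α * t) / (1 + D) := by
      have he : (0:ℝ) < Real.exp (α * t) := Real.exp_pos _
      rw [← Real.log_div (by positivity) hD1.ne']
      have h4 := Real.log_le_sub_one_of_pos
        (show (0:ℝ) < (Real.exp (α * t) + D) / (1 + D) by positivity)
      have h5 : Real.exp (α * t) - 1 ≤ α * t * Real.exp (α * t) := by
        have h := mul_le_mul_of_nonneg_left (Real.add_one_le_exp (-(α * t)))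
          (Real.exp_pos (α * t)).le
        rw [← Real.exp_add] at h
        simp at h
        nlinarith
      have h6 : (Real.exp (α * t) + D) / (1 + D) - 1 = (Real.exp (α * t) - 1) / (1 + D) := by
        field_simp
        ring
      have h7 : (Real.exp (α * t) - 1) / (1 + D) ≤ α * t * Real.exp (α * t) / (1 + D) := by
        gcongr
      linarith
    have hlw : (0:ℝ) ≤ lam * w k := mul_nonneg hlam.le (hw k)
    have hub : lam * (w k * (Real.log (Real.exp (α * t) + D) - Real.log (1 + D)))
        ≤ lam * w k * (α * t * Real.exp (α * t) / (1 + D)) := by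
      rw [← mul_assoc]
      exact mul_le_mul_of_nonneg_left hlog hlw
    have habs : |t * S| ≤ t ^ 2 * C
        + lam * (w k * (Real.log (Real.exp (α * t) + D) - Real.log (1 + D))) :=
      abs_le.mpr ⟨by linarith, h1⟩
    have heq : t ^ 2 * C + lam * w k * (α * t * Real.exp (α * t) / (1 + D))
        = t * (t * C + lam * w k * α * Real.exp (α * t) / (1 + D)) := by ring
    rw [abs_mul, abs_of_pos ht] at habs
    have hb : t * |S| ≤ t * (t * C + lam * w k * α * Real.exp (α * t) / (1 + D)) := by
      linarith
    exact le_of_mul_le_mul_left hb ht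
  have hlim : Filter.Tendsto
      (fun t : ℝ => t * C + lam * w k * α * Real.exp (α * t) / (1 + D))
      (nhdsWithin 0 (Set.Ioi 0)) (nhds (lam * α * w k / (1 + D))) := by
    have hc : Continuous fun t : ℝ => t * C + lam * w k * α * Real.exp (α * t) / (1 + D) := by
      exact (continuous_id.mul continuous_const).add
        ((continuous_const.mul (Real.continuous_exp.comp (continuous_const.mul continuous_id))).div_const _)
    have h0 : (fun t : ℝ => t * C + lam * w k * α * Real.exp (α * t) / (1 + D)) 0
        = lam * α * w k / (1 + D) := by
      simp
      ring
    exact h0 ▸ (hc.continuousAt (x := 0)).tendsto.mono_left nhdsWithin_le_nhds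
  refine ge_of_tendsto hlim ?_
  filter_upwards [self_mem_nhdsWithin] with t ht using key2 t ht
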